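/- Lemma 4 (existence of a minimizer of the distance metric). Let Z, Z⋆ ∈ ℂ^{n_s×r} with s := σ_min(Z⋆) > 0. Suppose there exists an invertible P̂ ∈ ℂ^{r×r} such that, setting Ẑ₁ = Z⋆P̂ and Ẑ₂ = Z⋆P̂^{−T}, one has √(‖Z − Ẑ₁‖_F² + ‖Z − Ẑ₂‖_F²) ≤ ε·s for some ε with 0 ≤ ε ≤ √2/8, and moreover σ_min(Ẑ₁) ≥ (√2/2)·s or σ_min(Ẑ₂) ≥ (√2/2)·s. Then the infimum defining dist_P(Z, Z⋆) is attained: there exists an invertible P₀ ∈ ℂ^{r×r} with √(‖Z − Z⋆P₀‖_F² + ‖Z − Z⋆P₀^{−T}‖_F²) = dist_P(Z, Z⋆). -/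

import Mathlib

open Matrix
open scoped BigOperators

set_option maxHeartbeats 1600000
noncomputable section

/-- Frobenius norm of a complex matrix. -/
def frobNorm {m n : ℕ} (A : Matrix (Fin m) (Fin n) ℂ) : ℝ :=
  Real.sqrt (∑ i, ∑ j, ‖A i j‖ ^ 2)

/-- Euclidean (ℓ₂) norm of a complex vector. -/
def vecNorm {n : ℕ} (v : Fin n → ℂ) : ℝ :=
  Real.sqrt (∑ i, ‖v i‖ ^ 2)

/-- Smallest singular value of a complex matrix: infimum of `‖Av‖₂` over unit vectors `v`. -/
def sigmaMin {m n : ℕ} (A : Matrix (Fin m) (Fin n) ℂ) : ℝ :=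
  sInf {t : ℝ | ∃ v : Fin n → ℂ, vecNorm v = 1 ∧ t = vecNorm (A.mulVec v)}

/-- Distance via alignment over invertible matrices. -/
def distP {ns r : ℕ} (Z Zs : Matrix (Fin ns) (Fin r) ℂ) : ℝ :=
  sInf {t : ℝ | ∃ P : Matrix (Fin r) (Fin r) ℂ, IsUnit P ∧
    t = Real.sqrt (frobNorm (Z - Zs * P) ^ 2 + frobNorm (Z - Zs * (P⁻¹)ᵀ) ^ 2)}

/-! ### Auxiliary lemmas -/

lemma frobNorm_nonneg {m n : ℕ} (A : Matrix (Fin m) (Fin n) ℂ) : 0 ≤ frobNorm A :=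
  Real.sqrt_nonneg _

lemma vecNorm_nonneg {n : ℕ} (v : Fin n → ℂ) : 0 ≤ vecNorm v :=
  Real.sqrt_nonneg _

lemma frobNorm_sq {m n : ℕ} (A : Matrix (Fin m) (Fin n) ℂ) :
    frobNorm A ^ 2 = ∑ i, ∑ j, ‖A i j‖ ^ 2 :=
  Real.sq_sqrt (Finset.sum_nonneg fun _ _ => Finset.sum_nonneg fun _ _ => sq_nonneg _)

lemma vecNorm_sq {n : ℕ} (v : Fin n → ℂ) :
    vecNorm v ^ 2 = ∑ i, ‖v i‖ ^ 2 :=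
  Real.sq_sqrt (Finset.sum_nonneg fun _ _ => sq_nonneg _)

lemma vecNorm_smul {n : ℕ} (c : ℂ) (v : Fin n → ℂ) :
    vecNorm (c • v) = ‖c‖ * vecNorm v := by
  unfold vecNorm
  rw [show (∑ i, ‖(c • v) i‖ ^ 2) = ‖c‖ ^ 2 * ∑ i, ‖v i‖ ^ 2 by
    rw [Finset.mul_sum]; congr 1; ext i; simp [norm_mul, mul_pow]]
  rw [Real.sqrt_mul (sq_nonneg _), Real.sqrt_sq (norm_nonneg _)]

section Frob
attribute [local instance] Matrix.frobeniusSeminormedAddCommGroup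

lemma frobNorm_eq {m n : ℕ} (A : Matrix (Fin m) (Fin n) ℂ) : frobNorm A = ‖A‖ := by
  rw [Matrix.frobenius_norm_def, frobNorm, Real.sqrt_eq_rpow]
  norm_num

lemma frobNorm_sub_le {m n : ℕ} (A B C : Matrix (Fin m) (Fin n) ℂ) :
    frobNorm (B - C) ≤ frobNorm (A - B) + frobNorm (A - C) := by
  simp only [frobNorm_eq]
  calc ‖B - C‖ = ‖(A - C) - (A - B)‖ := by
        rw [show (A - C) - (A - B) = B - C by abel]
    _ ≤ ‖A - C‖ + ‖A - B‖ := norm_sub_le _ _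
    _ = ‖A - B‖ + ‖A - C‖ := by ring

lemma frobNorm_le_sub_add {m n : ℕ} (A B : Matrix (Fin m) (Fin n) ℂ) :
    frobNorm A ≤ frobNorm (A - B) + frobNorm B := by
  simp only [frobNorm_eq]
  calc ‖A‖ = ‖(A - B) + B‖ := by rw [sub_add_cancel]
    _ ≤ ‖A - B‖ + ‖B‖ := norm_add_le _ _

end Frob

lemma frobNorm_zero {m n : ℕ} : frobNorm (0 : Matrix (Fin m) (Fin n) ℂ) = 0 := by
  simp [frobNorm]

lemma norm_entry_le_frobNorm {m n : ℕ} (A : Matrix (Fin m) (Fin n) ℂ) (i : Fin m) (j : Fin n) :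
    ‖A i j‖ ≤ frobNorm A := by
  rw [frobNorm, show ‖A i j‖ = Real.sqrt (‖A i j‖ ^ 2) from (Real.sqrt_sq (norm_nonneg _)).symm]
  apply Real.sqrt_le_sqrt
  calc ‖A i j‖ ^ 2 ≤ ∑ j', ‖A i j'‖ ^ 2 :=
        Finset.single_le_sum (f := fun j' => ‖A i j'‖ ^ 2)
          (fun _ _ => sq_nonneg _) (Finset.mem_univ j)
    _ ≤ ∑ i', ∑ j', ‖A i' j'‖ ^ 2 :=
        Finset.single_le_sum (f := fun i' => ∑ j', ‖A i' j'‖ ^ 2)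
          (fun _ _ => Finset.sum_nonneg fun _ _ => sq_nonneg _) (Finset.mem_univ i)

lemma le_sqrt_add_sq_left {a b : ℝ} (ha : 0 ≤ a) : a ≤ Real.sqrt (a ^ 2 + b ^ 2) := by
  have h : Real.sqrt (a ^ 2) ≤ Real.sqrt (a ^ 2 + b ^ 2) :=
    Real.sqrt_le_sqrt (by nlinarith [sq_nonneg b])
  rwa [Real.sqrt_sq ha] at h

lemma le_sqrt_add_sq_right {a b : ℝ} (hb : 0 ≤ b) : b ≤ Real.sqrt (a ^ 2 + b ^ 2) := by
  have h : Real.sqrt (b ^ 2) ≤ Real.sqrt (a ^ 2 + b ^ 2) :=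
    Real.sqrt_le_sqrt (by nlinarith [sq_nonneg a])
  rwa [Real.sqrt_sq hb] at h

lemma sigmaMin_mulVec_le {m n : ℕ} (A : Matrix (Fin m) (Fin n) ℂ) (v : Fin n → ℂ) :
    sigmaMin A * vecNorm v ≤ vecNorm (A.mulVec v) := by
  rcases eq_or_ne v 0 with rfl | hv
  · simp [vecNorm, Matrix.mulVec_zero]
  · have hc : 0 < vecNorm v := by
      rcases (vecNorm_nonneg v).lt_or_eq with h | h
      · exact h
      · exfalso; apply hv
        have hsum : (∑ i, ‖v i‖ ^ 2) = 0 := by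
          have := vecNorm_sq v
          rw [← h] at this; simpa using this.symm
        funext i
        have hi : ‖v i‖ ^ 2 = 0 := by
          have hnn : ∀ k ∈ Finset.univ, (0:ℝ) ≤ ‖v k‖ ^ 2 := fun _ _ => sq_nonneg _
          exact (Finset.sum_eq_zero_iff_of_nonneg hnn).mp hsum i (Finset.mem_univ i)
        simpa using pow_eq_zero_iff (n := 2) (by norm_num) |>.mp hi
    set c : ℝ := vecNorm v with hcdef
    have hcC : (c : ℂ) ≠ 0 := by exact_mod_cast hc.ne'
    set u : Fin n → ℂ := ((c : ℂ))⁻¹ • v with hudef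
    have hu : vecNorm u = 1 := by
      rw [hudef, vecNorm_smul, norm_inv, Complex.norm_real, Real.norm_of_nonneg hc.le,
        ← hcdef, inv_mul_cancel₀ hc.ne']
    have hbdd : BddBelow {t : ℝ | ∃ w : Fin n → ℂ, vecNorm w = 1 ∧ t = vecNorm (A.mulVec w)} :=
      ⟨0, by rintro t ⟨w, _, rfl⟩; exact vecNorm_nonneg _⟩
    have h1 : sigmaMin A ≤ vecNorm (A.mulVec u) := csInf_le hbdd ⟨u, hu, rfl⟩
    have hv' : A.mulVec v = (c : ℂ) • A.mulVec u := by
      rw [← Matrix.mulVec_smul]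
      congr 1
      rw [hudef, smul_smul, mul_inv_cancel₀ hcC, one_smul]
    rw [hv', vecNorm_smul, Complex.norm_real, Real.norm_of_nonneg hc.le, mul_comm]
    exact mul_le_mul_of_nonneg_left h1 hc.le

lemma sigmaMin_mul_frobNorm_le {ns r : ℕ} (Zs : Matrix (Fin ns) (Fin r) ℂ)
    (hs : 0 ≤ sigmaMin Zs) (X : Matrix (Fin r) (Fin r) ℂ) :
    sigmaMin Zs * frobNorm X ≤ frobNorm (Zs * X) := by
  have key : (sigmaMin Zs * frobNorm X) ^ 2 ≤ frobNorm (Zs * X) ^ 2 := by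
    calc (sigmaMin Zs * frobNorm X) ^ 2
        = ∑ j, (sigmaMin Zs * vecNorm fun k => X k j) ^ 2 := by
          rw [mul_pow, frobNorm_sq, Finset.sum_comm, Finset.mul_sum]
          refine Finset.sum_congr rfl fun j _ => ?_
          rw [mul_pow, vecNorm_sq]
      _ ≤ ∑ j, vecNorm (Zs.mulVec fun k => X k j) ^ 2 :=
          Finset.sum_le_sum fun j _ =>
            pow_le_pow_left₀ (mul_nonneg hs (vecNorm_nonneg _))
              (sigmaMin_mulVec_le Zs fun k => X k j) 2
      _ = frobNorm (Zs * X) ^ 2 := by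
          rw [frobNorm_sq, Finset.sum_comm]
          refine Finset.sum_congr rfl fun j _ => ?_
          rw [vecNorm_sq]
          refine Finset.sum_congr rfl fun i _ => ?_
          simp [Matrix.mul_apply, Matrix.mulVec, dotProduct]
  have h1 : 0 ≤ sigmaMin Zs * frobNorm X := mul_nonneg hs (frobNorm_nonneg _)
  nlinarith [frobNorm_nonneg (Zs * X)]

lemma frobNorm_continuous {m n : ℕ} :
    Continuous (frobNorm : Matrix (Fin m) (Fin n) ℂ → ℝ) := by
  unfold frobNorm
  apply Real.continuous_sqrt.comp
  apply continuous_finset_sum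
  intro i _
  apply continuous_finset_sum
  intro j _
  exact (continuous_id.matrix_elem i j).norm.pow 2

/-- Lemma 4: existence of a minimizer of the distance metric `dist_P`. -/
theorem distP_minimizer_exists (ns r : ℕ) (Z Zs : Matrix (Fin ns) (Fin r) ℂ)
    (hs : 0 < sigmaMin Zs) (ε : ℝ) (hε0 : 0 ≤ ε) (hε : ε ≤ Real.sqrt 2 / 8)
    (Phat : Matrix (Fin r) (Fin r) ℂ) (hPhat : IsUnit Phat)
    (hnear : Real.sqrt (frobNorm (Z - Zs * Phat) ^ 2
        + frobNorm (Z - Zs * (Phat⁻¹)ᵀ) ^ 2) ≤ ε * sigmaMin Zs)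
    (hcond : sigmaMin (Zs * Phat) ≥ Real.sqrt 2 / 2 * sigmaMin Zs
        ∨ sigmaMin (Zs * (Phat⁻¹)ᵀ) ≥ Real.sqrt 2 / 2 * sigmaMin Zs) :
    ∃ P₀ : Matrix (Fin r) (Fin r) ℂ, IsUnit P₀ ∧
      Real.sqrt (frobNorm (Z - Zs * P₀) ^ 2 + frobNorm (Z - Zs * (P₀⁻¹)ᵀ) ^ 2)
        = distP Z Zs := by
  classical
  set Qhat : Matrix (Fin r) (Fin r) ℂ := (Phat⁻¹)ᵀ with hQhatdef
  set g : Matrix (Fin r) (Fin r) ℂ × Matrix (Fin r) (Fin r) ℂ → ℝ := fun PQ =>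
    Real.sqrt (frobNorm (Z - Zs * PQ.1) ^ 2 + frobNorm (Z - Zs * PQ.2) ^ 2) with hgdef
  have hgc : Continuous g := by
    apply Real.continuous_sqrt.comp
    exact ((frobNorm_continuous.comp
        (continuous_const.sub (continuous_const.matrix_mul continuous_fst))).pow 2).add
      ((frobNorm_continuous.comp
        (continuous_const.sub (continuous_const.matrix_mul continuous_snd))).pow 2)
  set g0 : ℝ := g (Phat, Qhat) with hg0def
  have hg0 : 0 ≤ g0 := Real.sqrt_nonneg _
  set B : ℝ := 2 * g0 / sigmaMin Zs with hBdef
  have hB : 0 ≤ B := by positivity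
  set K : Set (Matrix (Fin r) (Fin r) ℂ × Matrix (Fin r) (Fin r) ℂ) := {PQ | PQ.1 * PQ.2ᵀ = 1 ∧ g PQ ≤ g0 ∧
    frobNorm (PQ.1 - Phat) ≤ B ∧ frobNorm (PQ.2 - Qhat) ≤ B} with hKdef
  have hPhatinv : Phat * Phat⁻¹ = 1 :=
    Matrix.mul_nonsing_inv _ ((Matrix.isUnit_iff_isUnit_det _).mp hPhat)
  have hKhat : (Phat, Qhat) ∈ K := by
    refine ⟨?_, le_refl _, ?_, ?_⟩
    · show Phat * Qhatᵀ = 1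
      rw [hQhatdef, Matrix.transpose_transpose, hPhatinv]
    · show frobNorm (Phat - Phat) ≤ B
      rw [sub_self, frobNorm_zero]; exact hB
    · show frobNorm (Qhat - Qhat) ≤ B
      rw [sub_self, frobNorm_zero]; exact hB
  have hKclosed : IsClosed K := by
    have h1 : IsClosed {PQ : Matrix (Fin r) (Fin r) ℂ × Matrix (Fin r) (Fin r) ℂ | PQ.1 * PQ.2ᵀ = 1} :=
      isClosed_eq (continuous_fst.matrix_mul continuous_snd.matrix_transpose) continuous_const
    have h2 : IsClosed {PQ : Matrix (Fin r) (Fin r) ℂ × Matrix (Fin r) (Fin r) ℂ | g PQ ≤ g0} := isClosed_le hgc continuous_const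
    have h3 : IsClosed {PQ : Matrix (Fin r) (Fin r) ℂ × Matrix (Fin r) (Fin r) ℂ | frobNorm (PQ.1 - Phat) ≤ B} :=
      isClosed_le (frobNorm_continuous.comp (continuous_fst.sub continuous_const))
        continuous_const
    have h4 : IsClosed {PQ : Matrix (Fin r) (Fin r) ℂ × Matrix (Fin r) (Fin r) ℂ | frobNorm (PQ.2 - Qhat) ≤ B} :=
      isClosed_le (frobNorm_continuous.comp (continuous_snd.sub continuous_const))
        continuous_const
    exact (h1.inter (h2.inter (h3.inter h4)))
  set c : ℝ := B + frobNorm Phat + frobNorm Qhat with hcdef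
  have hSc : IsCompact {P : Matrix (Fin r) (Fin r) ℂ | ∀ i j, ‖P i j‖ ≤ c} := by
    have heq : {P : Matrix (Fin r) (Fin r) ℂ | ∀ i j, ‖P i j‖ ≤ c} =
        Set.pi Set.univ (fun _ : Fin r => Set.pi Set.univ
          (fun _ : Fin r => Metric.closedBall (0 : ℂ) c)) := by
      ext P
      constructor
      · intro h
        exact fun i _ j _ => mem_closedBall_zero_iff.mpr (h i j)
      · intro h i j
        exact mem_closedBall_zero_iff.mp (h i (Set.mem_univ i) j (Set.mem_univ j))
    rw [heq]
    exact isCompact_univ_pi fun _ => isCompact_univ_pi fun _ => isCompact_closedBall _ _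
  have hKsub : K ⊆ {P : Matrix (Fin r) (Fin r) ℂ | ∀ i j, ‖P i j‖ ≤ c} ×ˢ {P : Matrix (Fin r) (Fin r) ℂ | ∀ i j, ‖P i j‖ ≤ c} := by
    rintro ⟨P, Q⟩ ⟨-, -, hP, hQ⟩
    constructor
    · intro i j
      calc ‖P i j‖ ≤ frobNorm P := norm_entry_le_frobNorm P i j
        _ ≤ frobNorm (P - Phat) + frobNorm Phat := frobNorm_le_sub_add P Phat
        _ ≤ c := by
            have := frobNorm_nonneg Qhat
            rw [hcdef]; linarith
    · intro i j
      calc ‖Q i j‖ ≤ frobNorm Q := norm_entry_le_frobNorm Q i j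
        _ ≤ frobNorm (Q - Qhat) + frobNorm Qhat := frobNorm_le_sub_add Q Qhat
        _ ≤ c := by
            have := frobNorm_nonneg Phat
            rw [hcdef]; linarith
  have hKcompact : IsCompact K := (hSc.prod hSc).of_isClosed_subset hKclosed hKsub
  obtain ⟨⟨P₀, Q₀⟩, hmem, hmin⟩ :=
    hKcompact.exists_isMinOn ⟨(Phat, Qhat), hKhat⟩ hgc.continuousOn
  obtain ⟨hPQ1, hle0, -, -⟩ := hmem
  have hdet : IsUnit P₀.det :=
    IsUnit.of_mul_eq_one (a := P₀.det) Q₀ᵀ.det (by rw [← Matrix.det_mul, hPQ1, Matrix.det_one])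
  have hP0unit : IsUnit P₀ := (Matrix.isUnit_iff_isUnit_det _).mpr hdet
  have hQ0 : (P₀⁻¹)ᵀ = Q₀ := by
    rw [Matrix.inv_eq_right_inv hPQ1, Matrix.transpose_transpose]
  refine ⟨P₀, hP0unit, ?_⟩
  have hval : Real.sqrt (frobNorm (Z - Zs * P₀) ^ 2 + frobNorm (Z - Zs * (P₀⁻¹)ᵀ) ^ 2)
      = g (P₀, Q₀) := by rw [hQ0]
  rw [hval, distP]
  have hbdd : BddBelow {t : ℝ | ∃ P : Matrix (Fin r) (Fin r) ℂ, IsUnit P ∧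
      t = Real.sqrt (frobNorm (Z - Zs * P) ^ 2 + frobNorm (Z - Zs * (P⁻¹)ᵀ) ^ 2)} :=
    ⟨0, by rintro t ⟨P, -, rfl⟩; exact Real.sqrt_nonneg _⟩
  apply le_antisymm
  · refine le_csInf ⟨_, Phat, hPhat, rfl⟩ ?_
    rintro t ⟨P, hP, rfl⟩
    have hPinv : P * P⁻¹ = 1 :=
      Matrix.mul_nonsing_inv _ ((Matrix.isUnit_iff_isUnit_det _).mp hP)
    by_cases hcase : g0 ≤
        Real.sqrt (frobNorm (Z - Zs * P) ^ 2 + frobNorm (Z - Zs * (P⁻¹)ᵀ) ^ 2)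
    · exact le_trans ((isMinOn_iff.mp hmin) _ hKhat) hcase
    · push_neg at hcase
      have htg : Real.sqrt (frobNorm (Z - Zs * P) ^ 2 + frobNorm (Z - Zs * (P⁻¹)ᵀ) ^ 2)
          = g (P, (P⁻¹)ᵀ) := rfl
      have ha : frobNorm (Z - Zs * P) ≤ g (P, (P⁻¹)ᵀ) :=
        le_sqrt_add_sq_left (frobNorm_nonneg _)
      have hb : frobNorm (Z - Zs * (P⁻¹)ᵀ) ≤ g (P, (P⁻¹)ᵀ) :=
        le_sqrt_add_sq_right (frobNorm_nonneg _)
      have hahat : frobNorm (Z - Zs * Phat) ≤ g0 :=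
        le_sqrt_add_sq_left (frobNorm_nonneg _)
      have hbhat : frobNorm (Z - Zs * Qhat) ≤ g0 :=
        le_sqrt_add_sq_right (frobNorm_nonneg _)
      have hbound1 : frobNorm (P - Phat) ≤ B := by
        have h5 : sigmaMin Zs * frobNorm (P - Phat) ≤ frobNorm (Zs * (P - Phat)) :=
          sigmaMin_mul_frobNorm_le Zs hs.le _
        have h6 : Zs * (P - Phat) = Zs * P - Zs * Phat := Matrix.mul_sub _ _ _
        have h7 : frobNorm (Zs * P - Zs * Phat)
            ≤ frobNorm (Z - Zs * P) + frobNorm (Z - Zs * Phat) := frobNorm_sub_le Z _ _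
        rw [hBdef, le_div_iff₀ hs, mul_comm]
        rw [h6] at h5
        linarith [hcase.le, ha, hahat, le_trans h5 h7]
      have hbound2 : frobNorm ((P⁻¹)ᵀ - Qhat) ≤ B := by
        have h5 : sigmaMin Zs * frobNorm ((P⁻¹)ᵀ - Qhat)
            ≤ frobNorm (Zs * ((P⁻¹)ᵀ - Qhat)) := sigmaMin_mul_frobNorm_le Zs hs.le _
        have h6 : Zs * ((P⁻¹)ᵀ - Qhat) = Zs * (P⁻¹)ᵀ - Zs * Qhat := Matrix.mul_sub _ _ _
        have h7 : frobNorm (Zs * (P⁻¹)ᵀ - Zs * Qhat)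
            ≤ frobNorm (Z - Zs * (P⁻¹)ᵀ) + frobNorm (Z - Zs * Qhat) := frobNorm_sub_le Z _ _
        rw [hBdef, le_div_iff₀ hs, mul_comm]
        rw [h6] at h5
        linarith [hcase.le, hb, hbhat, le_trans h5 h7]
      have hPK : (P, (P⁻¹)ᵀ) ∈ K := by
        refine ⟨?_, hcase.le, hbound1, hbound2⟩
        show P * ((P⁻¹)ᵀ)ᵀ = 1
        rw [Matrix.transpose_transpose, hPinv]
      rw [htg]
      exact (isMinOn_iff.mp hmin) (P, (P⁻¹)ᵀ) hPK
  · exact csInf_le hbdd ⟨P₀, hP0unit, hval.symm⟩
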